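/- The change of variables (x,y) ↦ (u,v) = (e/x − d, 1/(d + e·y)), where d is a fixed positive odd integer and e ∈ {±1}, preserves the measure dμ = dx dy/(1+xy)²; that is, the Jacobian determinant ∂(x,y)/∂(u,v) satisfies (1+xy)^{−2} · |∂(x,y)/∂(u,v)| = (1+uv)^{−2} at all points where the maps are defined and 1+xy ≠ 0, 1+uv ≠ 0. -/

import Mathlib

/-- Measure-invariance computation: for the change of variables
(x,y) ↦ (u,v) = (e/x − d, 1/(d + e·y)), with d a positive odd integer and
e ∈ {±1}, the Jacobian ∂(x,y)/∂(u,v) = x²(d+ey)² satisfies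
(1+xy)⁻² · x²(d+ey)² = (1+uv)⁻². -/
theorem stmt6 (d : ℤ) (hd : Odd d) (hdpos : 0 < d) (e : ℝ) (he : e = 1 ∨ e = -1)
    (x y u v : ℝ) (hx : x ≠ 0) (hden : (d:ℝ) + e*y ≠ 0)
    (hu : u = e/x - d) (hv : v = 1/((d:ℝ) + e*y))
    (hxy : 1 + x*y ≠ 0) (huv : 1 + u*v ≠ 0) :
    (1 + x*y)⁻¹^2 * (x^2 * ((d:ℝ) + e*y)^2) = (1 + u*v)⁻¹^2 := by
  have he2 : e^2 = 1 := by rcases he with h | h <;> simp [h]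
  have key : (1 + u*v) * (x * ((d:ℝ) + e*y)) = e * (1 + x*y) := by
    subst hu hv
    field_simp
    ring_nf
  have key2 : (1 + u*v)^2 * (x^2 * ((d:ℝ) + e*y)^2) = (1 + x*y)^2 := by
    have := congrArg (·^2) key
    nlinarith [this, he2]
  have h2 : (1+u*v)^2 ≠ 0 := pow_ne_zero 2 huv
  have h3 : (1+x*y)^2 ≠ 0 := pow_ne_zero 2 hxy
  field_simp
  linarith [key2]
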